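/- Let c₀ be a real number with 0 < |c₀| < √2. Then the function c ↦ P(Q_c) := (1/2)·∫_ℝ η_c(x)·v_c(x) dx, defined for c in a neighborhood of c₀ contained in (−√2,√2)∖{0}, is differentiable at c₀ with derivative equal to √(2−c₀²). -/

import Mathlib

open MeasureTheory Real Filter Topology

private lemma soliton_alg (c k ch sh : ℝ) (hc : c ≠ 0) (hch : 0 < ch) (hsh : sh ^ 2 = ch ^ 2 - 1)
    (hk2 : k ^ 2 = 2 - c ^ 2) :
    c * k / 2 * ((ch * (k / 2) * ch - sh * (sh * (k / 2))) / ch ^ 2)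
      - 1 / (1 + (k * (sh / ch) / c) ^ 2) * (k * ((ch * (k / 2) * ch - sh * (sh * (k / 2))) / ch ^ 2) / c)
    = ((2 - c ^ 2) / (2 * ch ^ 2)) * (-c * ((2 - c ^ 2) / (2 * ch ^ 2)) / (2 * (1 - (2 - c ^ 2) / (2 * ch ^ 2)))) := by
  have hch' : ch ≠ 0 := ne_of_gt hch
  have hc2 : (0:ℝ) < c ^ 2 := by positivity
  have hd : (0:ℝ) < 2*ch^2 - 2 + c^2 := by nlinarith [sq_nonneg sh]
  have hnum : ch * (k / 2) * ch - sh * (sh * (k / 2)) = k / 2 := by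
    linear_combination (-(k/2)) * hsh
  have hu : 1 + (k * (sh / ch) / c) ^ 2 = (2*ch^2 - 2 + c^2)/(c^2*ch^2) := by
    field_simp
    linear_combination k^2 * hsh + (ch^2 - 1) * hk2
  have h2 : 1 - (2 - c ^ 2) / (2 * ch ^ 2) = (2*ch^2 - 2 + c^2)/(2*ch^2) := by
    field_simp; ring
  rw [hnum, hu, h2]
  field_simp
  rw [hk2, one_sub_div (ne_of_gt (by linarith) : (2 * (ch ^ 2 - 1) + c ^ 2) ≠ 0)]
  ring

private lemma sq_le_sinh_sq (a : ℝ) : a ^ 2 ≤ Real.sinh a ^ 2 := by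
  have key : ∀ b : ℝ, 0 ≤ b → b ≤ Real.sinh b := by
    intro b hb
    rcases eq_or_lt_of_le hb with h | h
    · simp [← h]
    · exact le_of_lt (Real.self_lt_sinh_iff.mpr h)
  rcases le_total 0 a with h | h
  · nlinarith [key a h]
  · have := key (-a) (by linarith)
    rw [Real.sinh_neg] at this
    nlinarith

private lemma tanh_eq (a : ℝ) :
    Real.sinh a / Real.cosh a = 1 - 2 / (Real.exp (2 * a) + 1) := by
  have h1 : Real.exp (2 * a) = Real.exp a * Real.exp a := by
    rw [← Real.exp_add]; ring_nf
  have h2 : (0:ℝ) < Real.exp a := Real.exp_pos a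
  rw [Real.sinh_eq, Real.cosh_eq, Real.exp_neg, h1]
  have h3 : Real.exp a + (Real.exp a)⁻¹ ≠ 0 := by positivity
  have h4 : Real.exp a * Real.exp a + 1 ≠ 0 := by positivity
  field_simp
  ring

/-- The closed form of the momentum integral. -/
private lemma integral_eta_v (c : ℝ) (hc0 : c ≠ 0) (hc2 : c ^ 2 < 2)
    (η v : ℝ → ℝ → ℝ)
    (hη : ∀ c x : ℝ, η c x =
      (2 - c ^ 2) / (2 * (Real.cosh (Real.sqrt (2 - c ^ 2) * x / 2)) ^ 2))
    (hv : ∀ c x : ℝ, v c x = -c * η c x / (2 * (1 - η c x))) :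
    ∫ x : ℝ, η c x * v c x
      = c * Real.sqrt (2 - c ^ 2) - 2 * Real.arctan (Real.sqrt (2 - c ^ 2) / c) := by
  set k := Real.sqrt (2 - c ^ 2) with hkdef
  have h2c : (0:ℝ) < 2 - c ^ 2 := by linarith
  have hk : 0 < k := Real.sqrt_pos.mpr h2c
  have hk2 : k ^ 2 = 2 - c ^ 2 := Real.sq_sqrt h2c.le
  have hc2pos : (0:ℝ) < c ^ 2 := by positivity
  set t : ℝ → ℝ := fun x => Real.sinh (k * x / 2) / Real.cosh (k * x / 2) with htdef
  set G : ℝ → ℝ := fun x => c * k / 2 * t x - Real.arctan (k * t x / c) with hGdef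
  have hfx : ∀ x : ℝ, η c x * v c x =
      ((2 - c ^ 2) / (2 * (Real.cosh (k * x / 2)) ^ 2)) *
        (-c * ((2 - c ^ 2) / (2 * (Real.cosh (k * x / 2)) ^ 2)) /
          (2 * (1 - (2 - c ^ 2) / (2 * (Real.cosh (k * x / 2)) ^ 2)))) := by
    intro x
    rw [hv, hη]
  -- derivative of G
  have hderiv : ∀ x : ℝ, HasDerivAt G (η c x * v c x) x := by
    intro x
    have hch : 0 < Real.cosh (k * x / 2) := Real.cosh_pos _
    have ha : HasDerivAt (fun y : ℝ => k * y / 2) (k / 2) x := by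
      simpa using ((hasDerivAt_id x).const_mul k).div_const 2
    have hsinh := ha.sinh
    have hcosh := ha.cosh
    have ht' := hsinh.div hcosh (ne_of_gt hch)
    have harc := ((ht'.const_mul k).div_const c).arctan
    have hG := (ht'.const_mul (c * k / 2)).sub harc
    refine hG.congr_deriv (Eq.symm ?_)
    rw [hfx x]
    have hsh2 : Real.sinh (k * x / 2) ^ 2 = Real.cosh (k * x / 2) ^ 2 - 1 := by
      have := Real.cosh_sq_sub_sinh_sq (k * x / 2); linarith
    have halg := soliton_alg c k (Real.cosh (k * x / 2)) (Real.sinh (k * x / 2)) hc0 hch hsh2 hk2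
    rw [← halg]
    rfl
  -- basic bounds on η
  have hkx : Continuous fun x : ℝ => k * x / 2 := by fun_prop
  have hchcont : Continuous fun x : ℝ => Real.cosh (k * x / 2) :=
    Real.continuous_cosh.comp hkx
  have hηcont : Continuous fun x => η c x := by
    have : (fun x => η c x)
        = fun x => (2 - c ^ 2) / (2 * (Real.cosh (k * x / 2)) ^ 2) := by
      funext x; rw [hη, ← hkdef]
    rw [this]
    exact continuous_const.div (continuous_const.mul (hchcont.pow 2))
      (fun x => by have := Real.cosh_pos (k * x / 2); positivity)
  have hηle : ∀ x : ℝ, η c x ≤ (2 - c ^ 2) / 2 := by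
    intro x
    rw [hη, ← hkdef]
    have h1 : (1:ℝ) ≤ Real.cosh (k * x / 2) := Real.one_le_cosh _
    have hch2 : (1:ℝ) ≤ Real.cosh (k * x / 2) ^ 2 := by nlinarith
    rw [div_le_div_iff₀ (by positivity) (by norm_num)]
    nlinarith [mul_le_mul_of_nonneg_left hch2 h2c.le]
  have hηnn : ∀ x : ℝ, 0 ≤ η c x := by
    intro x; rw [hη, ← hkdef]
    have := Real.cosh_pos (k * x / 2)
    exact div_nonneg h2c.le (by positivity)
  have h1mη : ∀ x : ℝ, c ^ 2 / 2 ≤ 1 - η c x := by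
    intro x; have := hηle x; linarith
  have hcont : Continuous fun x => η c x * v c x := by
    have heq : (fun x => η c x * v c x)
        = fun x => -(c * (η c x) ^ 2 / (2 * (1 - η c x))) := by
      funext x; rw [hv]; ring
    rw [heq]
    apply Continuous.neg
    exact Continuous.div (continuous_const.mul (hηcont.pow 2))
      (continuous_const.mul (continuous_const.sub hηcont))
      (fun x => ne_of_gt (by have h := h1mη x; nlinarith))
  -- the bound
  have hbound : ∀ x : ℝ, ‖η c x * v c x‖ ≤
      ((2 - c ^ 2) ^ 2 / |c|) * (1 + (k / 2 * x) ^ 2)⁻¹ := by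
    intro x
    have hI0 : (0:ℝ) < (1 + (k / 2 * x) ^ 2)⁻¹ := by positivity
    have hI1 : (1 + (k / 2 * x) ^ 2)⁻¹ ≤ 1 := by
      rw [inv_le_one_iff₀]; right; nlinarith [sq_nonneg (k/2*x)]
    have habs : 0 < |c| := abs_pos.mpr hc0
    have hη2 : η c x ≤ (2 - c ^ 2) * (1 + (k / 2 * x) ^ 2)⁻¹ := by
      rw [hη, ← hkdef]
      have hchpos := Real.cosh_pos (k * x / 2)
      have hchsq : 1 + (k / 2 * x) ^ 2 ≤ Real.cosh (k * x / 2) ^ 2 := by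
        have h1 := sq_le_sinh_sq (k * x / 2)
        have h2 := Real.cosh_sq_sub_sinh_sq (k * x / 2)
        nlinarith
      have hIpos : (0:ℝ) < 1 + (k / 2 * x) ^ 2 := by positivity
      have h3 : (1:ℝ) ≤ (1 + (k / 2 * x) ^ 2)⁻¹ * (2 * Real.cosh (k * x / 2) ^ 2) := by
        rw [inv_mul_eq_div, le_div_iff₀ hIpos]
        nlinarith
      rw [div_le_iff₀ (by positivity)]
      nlinarith [mul_le_mul_of_nonneg_left h3 h2c.le]
    have hpos2 : (0:ℝ) < 2 * (1 - η c x) := by have := h1mη x; nlinarith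
    have heqabs : ‖η c x * v c x‖ = |c| * (η c x) ^ 2 / (2 * (1 - η c x)) := by
      rw [hv]
      rw [show η c x * (-c * η c x / (2 * (1 - η c x)))
          = -(c * (η c x) ^ 2 / (2 * (1 - η c x))) by ring]
      rw [Real.norm_eq_abs, abs_neg, abs_div, abs_mul, abs_of_pos hpos2,
        abs_of_nonneg (sq_nonneg (η c x))]
    rw [heqabs]
    calc |c| * (η c x) ^ 2 / (2 * (1 - η c x))
        ≤ |c| * (η c x) ^ 2 / c ^ 2 := by
          rw [div_le_div_iff₀ hpos2 hc2pos]
          have hnum : (0:ℝ) ≤ |c| * (η c x) ^ 2 := by positivity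
          nlinarith [mul_le_mul_of_nonneg_left (h1mη x) hnum]
      _ = (η c x) ^ 2 / |c| := by
          field_simp
          linear_combination (η c x ^ 2) * abs_mul_abs_self c
      _ ≤ ((2 - c ^ 2) * (1 + (k / 2 * x) ^ 2)⁻¹) ^ 2 / |c| := by
          have hp := pow_le_pow_left₀ (hηnn x) hη2 2
          gcongr ?_ / |c|
      _ = (2 - c ^ 2) ^ 2 * ((1 + (k / 2 * x) ^ 2)⁻¹) ^ 2 / |c| := by ring
      _ ≤ (2 - c ^ 2) ^ 2 * (1 + (k / 2 * x) ^ 2)⁻¹ / |c| := by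
          have hXX : ((1 + (k / 2 * x) ^ 2)⁻¹) ^ 2 ≤ (1 + (k / 2 * x) ^ 2)⁻¹ := by
            nlinarith
          gcongr
      _ = ((2 - c ^ 2) ^ 2 / |c|) * (1 + (k / 2 * x) ^ 2)⁻¹ := by ring
  have hint : Integrable fun x => η c x * v c x := by
    have hmaj : Integrable fun x : ℝ =>
        ((2 - c ^ 2) ^ 2 / |c|) * (1 + (k / 2 * x) ^ 2)⁻¹ := by
      have := (integrable_inv_one_add_sq.comp_mul_left' (R := k / 2) (by positivity)).const_mul
        ((2 - c ^ 2) ^ 2 / |c|)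
      simpa using this
    exact Integrable.mono' hmaj hcont.aestronglyMeasurable
      (Eventually.of_forall hbound)
  -- limits of t
  have heq : ∀ x : ℝ, t x = 1 - 2 / (Real.exp (k * x) + 1) := by
    intro x
    have h := _root_.tanh_eq (k * x / 2)
    rw [show 2 * (k * x / 2) = k * x by ring] at h
    simpa only [htdef] using h
  have httop : Tendsto t atTop (𝓝 1) := by
    have hexp : Tendsto (fun x : ℝ => Real.exp (k * x)) atTop atTop :=
      Real.tendsto_exp_atTop.comp (tendsto_id.const_mul_atTop hk)
    have hden : Tendsto (fun x : ℝ => Real.exp (k * x) + 1) atTop atTop :=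
      tendsto_atTop_add_const_right _ 1 hexp
    have hfrac : Tendsto (fun x : ℝ => 2 / (Real.exp (k * x) + 1)) atTop (𝓝 0) :=
      Tendsto.div_atTop tendsto_const_nhds hden
    have h5 : Tendsto (fun x : ℝ => 1 - 2 / (Real.exp (k * x) + 1)) atTop (𝓝 (1 - 0)) :=
      tendsto_const_nhds.sub hfrac
    rw [sub_zero] at h5
    exact Tendsto.congr (fun x => (heq x).symm) h5
  have htbot : Tendsto t atBot (𝓝 (-1)) := by
    have hexp : Tendsto (fun x : ℝ => Real.exp (k * x)) atBot (𝓝 0) :=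
      Real.tendsto_exp_atBot.comp (tendsto_id.const_mul_atBot hk)
    have hfrac : Tendsto (fun x : ℝ => 2 / (Real.exp (k * x) + 1)) atBot (𝓝 (2 / (0 + 1))) :=
      tendsto_const_nhds.div (hexp.add tendsto_const_nhds) (by norm_num)
    have h5 : Tendsto (fun x : ℝ => 1 - 2 / (Real.exp (k * x) + 1)) atBot (𝓝 (1 - 2 / (0 + 1))) :=
      tendsto_const_nhds.sub hfrac
    have h1 : (1:ℝ) - 2 / (0 + 1) = -1 := by norm_num
    rw [h1] at h5
    exact Tendsto.congr (fun x => (heq x).symm) h5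
  -- limits of G
  have hGtop : Tendsto G atTop (𝓝 (c * k / 2 - Real.arctan (k / c))) := by
    have h := (httop.const_mul (c * k / 2)).sub
      ((Real.continuous_arctan.tendsto _).comp ((httop.const_mul k).div_const c))
    simpa [mul_one] using h
  have hGbot : Tendsto G atBot (𝓝 (-(c * k / 2) + Real.arctan (k / c))) := by
    have h := (htbot.const_mul (c * k / 2)).sub
      ((Real.continuous_arctan.tendsto _).comp ((htbot.const_mul k).div_const c))
    have h2 : c * k / 2 * (-1) - Real.arctan (k * (-1) / c)
        = -(c * k / 2) + Real.arctan (k / c) := by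
      rw [show k * (-1) / c = -(k / c) by ring, Real.arctan_neg]; ring
    rw [h2] at h
    exact h
  have hI := integral_of_hasDerivAt_of_tendsto hderiv hint hGbot hGtop
  rw [hI]
  ring

/-- The map `c ↦ P(Q_c)` is differentiable at any `c₀` with `0 < |c₀| < √2`, with
derivative `√(2 - c₀²)`. -/
theorem deriv_momentum_of_soliton (c₀ : ℝ) (hc0 : c₀ ≠ 0) (hc : |c₀| < Real.sqrt 2)
    (η v : ℝ → ℝ → ℝ)
    (hη : ∀ c x : ℝ, η c x =
      (2 - c ^ 2) / (2 * (Real.cosh (Real.sqrt (2 - c ^ 2) * x / 2)) ^ 2))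
    (hv : ∀ c x : ℝ, v c x = -c * η c x / (2 * (1 - η c x))) :
    HasDerivAt (fun c : ℝ => (1 / 2) * ∫ x : ℝ, η c x * v c x)
      (Real.sqrt (2 - c₀ ^ 2)) c₀ := by
  have h2 : c₀ ^ 2 < 2 := by
    have h1 : |c₀| ^ 2 < (Real.sqrt 2) ^ 2 :=
      pow_lt_pow_left₀ hc (abs_nonneg _) two_ne_zero
    rwa [sq_abs, Real.sq_sqrt (by norm_num : (0:ℝ) ≤ 2)] at h1
  set k₀ := Real.sqrt (2 - c₀ ^ 2) with hk₀def
  have h2c : (0:ℝ) < 2 - c₀ ^ 2 := by linarith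
  have hk : 0 < k₀ := Real.sqrt_pos.mpr h2c
  have hk2 : k₀ ^ 2 = 2 - c₀ ^ 2 := Real.sq_sqrt h2c.le
  -- derivative of the closed form
  have h1 : HasDerivAt (fun c : ℝ => 2 - c ^ 2) (0 - 2 * c₀ ^ 1) c₀ :=
    (hasDerivAt_const c₀ 2).sub (hasDerivAt_pow 2 c₀)
  have hsq : HasDerivAt (fun c : ℝ => Real.sqrt (2 - c ^ 2))
      ((0 - 2 * c₀ ^ 1) / (2 * k₀)) c₀ := h1.sqrt (ne_of_gt h2c)
  have hmul : HasDerivAt (fun c : ℝ => c * Real.sqrt (2 - c ^ 2))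
      (1 * k₀ + c₀ * ((0 - 2 * c₀ ^ 1) / (2 * k₀))) c₀ := (hasDerivAt_id c₀).mul hsq
  have hdiv : HasDerivAt (fun c : ℝ => Real.sqrt (2 - c ^ 2) / c)
      (((0 - 2 * c₀ ^ 1) / (2 * k₀) * c₀ - k₀ * 1) / c₀ ^ 2) c₀ :=
    hsq.div (hasDerivAt_id c₀) hc0
  have harc := hdiv.arctan
  have hΦ := (hmul.sub (harc.const_mul 2)).const_mul (1/2 : ℝ)
  have hval : (1/2 : ℝ) * ((1 * k₀ + c₀ * ((0 - 2 * c₀ ^ 1) / (2 * k₀)))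
      - 2 * (1 / (1 + (k₀ / c₀) ^ 2)
          * (((0 - 2 * c₀ ^ 1) / (2 * k₀) * c₀ - k₀ * 1) / c₀ ^ 2))) = k₀ := by
    have hd1 : 1 + (k₀ / c₀) ^ 2 = 2 / c₀ ^ 2 := by
      field_simp
      linear_combination hk2
    rw [hd1]
    field_simp
    ring
  have hΦ' : HasDerivAt (fun c : ℝ => (1/2 : ℝ) *
      (c * Real.sqrt (2 - c ^ 2) - 2 * Real.arctan (Real.sqrt (2 - c ^ 2) / c))) k₀ c₀ := by
    rw [← hval]
    exact hΦ
  have hopen : IsOpen {c : ℝ | c ≠ 0 ∧ c ^ 2 < 2} :=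
    IsOpen.inter isOpen_compl_singleton
      (isOpen_lt (f := fun c : ℝ => c ^ 2) (g := fun _ => (2:ℝ)) (by fun_prop) continuous_const)
  have hU : (fun c : ℝ => (1 / 2 : ℝ) * ∫ x : ℝ, η c x * v c x)
      =ᶠ[𝓝 c₀] fun c : ℝ => (1/2 : ℝ) *
        (c * Real.sqrt (2 - c ^ 2) - 2 * Real.arctan (Real.sqrt (2 - c ^ 2) / c)) := by
    filter_upwards [hopen.mem_nhds ⟨hc0, h2⟩] with c hcc
    rw [integral_eta_v c hcc.1 hcc.2 η v hη hv]
  exact (Filter.EventuallyEq.hasDerivAt_iff hU).mpr hΦ'
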